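/- Let ℋ be a finite set and ℓ : 𝒟^m × ℋ → ℝ with sensitivity Δℓ as above. The exponential mechanism, which on input D outputs h with probability exp(−ε ℓ(D,h)/(2Δℓ)) / ∑_{h'} exp(−ε ℓ(D,h')/(2Δℓ)), is ε-differentially private. -/

import Mathlib

open Finset

/-- Output probability of the exponential mechanism with loss `ℓ(D,·)`,
privacy parameter `ε` and sensitivity bound `Δ` on candidate `h`. -/
noncomputable def expMechProb {𝒟 ℋ : Type*} [Fintype ℋ]
    (ℓ : 𝒟 → ℋ → ℝ) (ε Δ : ℝ) (D : 𝒟) (h : ℋ) : ℝ :=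
  Real.exp (-ε * ℓ D h / (2 * Δ)) / ∑ h' : ℋ, Real.exp (-ε * ℓ D h' / (2 * Δ))

/-- privacy of the exponential mechanism: if
`|ℓ(D,h) − ℓ(D',h)| ≤ Δℓ` for all candidates `h` and neighboring databases,
then the exponential mechanism is `ε`-differentially private:
`P[M(D) = h] ≤ e^ε · P[M(D') = h]`. -/
theorem expMech_privacy {𝒟 ℋ : Type*} [Fintype ℋ] [Nonempty ℋ]
    (N : 𝒟 → 𝒟 → Prop) (ℓ : 𝒟 → ℋ → ℝ) (Δ : ℝ) (hΔ : 0 < Δ)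
    (hsens : ∀ (h : ℋ) (D D' : 𝒟), N D D' → |ℓ D h - ℓ D' h| ≤ Δ)
    (ε : ℝ) (hε : 0 ≤ ε) :
    ∀ D D', N D D' → ∀ h : ℋ,
      expMechProb ℓ ε Δ D h ≤ Real.exp ε * expMechProb ℓ ε Δ D' h := by
  intro D D' hN h
  have h2Δ : (0:ℝ) < 2 * Δ := by linarith
  have key : ∀ h' : ℋ, Real.exp (-ε * ℓ D h' / (2 * Δ)) ≤
      Real.exp (ε/2) * Real.exp (-ε * ℓ D' h' / (2 * Δ)) := by
    intro h'
    rw [← Real.exp_add, Real.exp_le_exp]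
    have hs := abs_le.mp (hsens h' D D' hN)
    have h1 : -ε * ℓ D h' ≤ ε * Δ + -ε * ℓ D' h' := by nlinarith [hs.1, hs.2]
    calc -ε * ℓ D h' / (2 * Δ) ≤ (ε * Δ + -ε * ℓ D' h') / (2 * Δ) :=
          (div_le_div_iff_of_pos_right h2Δ).mpr h1
      _ = ε / 2 + -ε * ℓ D' h' / (2 * Δ) := by field_simp
  have key' : ∀ h' : ℋ, Real.exp (-ε * ℓ D' h' / (2 * Δ)) ≤
      Real.exp (ε/2) * Real.exp (-ε * ℓ D h' / (2 * Δ)) := by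
    intro h'
    rw [← Real.exp_add, Real.exp_le_exp]
    have hs := abs_le.mp (hsens h' D D' hN)
    have h1 : -ε * ℓ D' h' ≤ ε * Δ + -ε * ℓ D h' := by nlinarith [hs.1, hs.2]
    calc -ε * ℓ D' h' / (2 * Δ) ≤ (ε * Δ + -ε * ℓ D h') / (2 * Δ) :=
          (div_le_div_iff_of_pos_right h2Δ).mpr h1
      _ = ε / 2 + -ε * ℓ D h' / (2 * Δ) := by field_simp
  have Spos : (0:ℝ) < ∑ h' : ℋ, Real.exp (-ε * ℓ D h' / (2 * Δ)) :=
    Finset.sum_pos (fun i _ => Real.exp_pos _) (by simp)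
  have S'pos : (0:ℝ) < ∑ h' : ℋ, Real.exp (-ε * ℓ D' h' / (2 * Δ)) :=
    Finset.sum_pos (fun i _ => Real.exp_pos _) (by simp)
  have hden : ∑ h' : ℋ, Real.exp (-ε * ℓ D' h' / (2 * Δ)) ≤
      Real.exp (ε/2) * ∑ h' : ℋ, Real.exp (-ε * ℓ D h' / (2 * Δ)) := by
    rw [Finset.mul_sum]
    exact Finset.sum_le_sum fun i _ => key' i
  unfold expMechProb
  rw [mul_div_assoc', div_le_div_iff₀ Spos S'pos]
  have hmul : Real.exp (-ε * ℓ D h / (2 * Δ)) *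
        ∑ h' : ℋ, Real.exp (-ε * ℓ D' h' / (2 * Δ)) ≤
      (Real.exp (ε/2) * Real.exp (-ε * ℓ D' h / (2 * Δ))) *
        (Real.exp (ε/2) * ∑ h' : ℋ, Real.exp (-ε * ℓ D h' / (2 * Δ))) :=
    mul_le_mul (key h) hden S'pos.le (by positivity)
  have hee : Real.exp (ε/2) * Real.exp (ε/2) = Real.exp ε := by
    rw [← Real.exp_add]; ring_nf
  calc Real.exp (-ε * ℓ D h / (2 * Δ)) * ∑ h' : ℋ, Real.exp (-ε * ℓ D' h' / (2 * Δ))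
      ≤ Real.exp (ε/2) * Real.exp (-ε * ℓ D' h / (2 * Δ)) *
        (Real.exp (ε/2) * ∑ h' : ℋ, Real.exp (-ε * ℓ D h' / (2 * Δ))) := hmul
    _ = Real.exp ε * Real.exp (-ε * ℓ D' h / (2 * Δ)) *
        ∑ h' : ℋ, Real.exp (-ε * ℓ D h' / (2 * Δ)) := by rw [← hee]; ring
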